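/- On the integer lattice graph ℤ (with unit weights, Laplacian Δf(x) = f(x+1) + f(x−1) − 2f(x)), define g(t) = exp(−t^{−β}) for t > 0 and g(t) = 0 for t ≤ 0, with β > 1, and define v(x,t) = g(t) + Σ_{k=1}^{∞} g^{(k)}(t)/(2k)! · (x+k)(x+k−1)⋯(x+1)·x·(x−1)⋯(x−k+1) for x ≥ 1, v(0,t)=g(t), and v(x,t)=v(−x−1,t) for x ≤ −1. Then v solves the heat equation ∂_t v(x,t) = v(x+1,t) + v(x−1,t) − 2v(x,t) on ℤ × ℝ. -/

import Mathlib

open Real Filter Topology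

/-- The flat function g(t) = exp(−t^{−β}) for t > 0 and g(t) = 0 for t ≤ 0. -/
noncomputable def flatFn (β : ℝ) (t : ℝ) : ℝ :=
  if 0 < t then Real.exp (-(t ^ (-β))) else 0

/-- The ancient solution on ℤ:
v(x,t) = Σ_{k≥0} g^{(k)}(t)/(2k)! · (x+k)⋯(x−k+1) for x ≥ 0 (the k = 0 term
being g(t)), and v(x,t) = v(−x−1,t) for x ≤ −1. -/
noncomputable def latticeSol (β : ℝ) (x : ℤ) (t : ℝ) : ℝ :=
  if 0 ≤ x then
    ∑' k : ℕ, iteratedDeriv k (flatFn β) t / (Nat.factorial (2 * k) : ℝ) *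
      ∏ i ∈ Finset.range (2 * k), ((x : ℝ) + (k : ℝ) - (i : ℝ))
  else
    ∑' k : ℕ, iteratedDeriv k (flatFn β) t / (Nat.factorial (2 * k) : ℝ) *
      ∏ i ∈ Finset.range (2 * k), (((-x - 1 : ℤ) : ℝ) + (k : ℝ) - (i : ℝ))

/-! ### Smoothness of the flat function -/

/-- A basic flat term `c * t^r * exp(-t^(-β))` for `t > 0`, zero otherwise. -/
noncomputable def FlatTerm (β c r : ℝ) (t : ℝ) : ℝ :=
  if 0 < t then c * t ^ r * Real.exp (-(t ^ (-β))) else 0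

/-- Functions expressible as finite sums of flat terms. -/
def GoodFlat (β : ℝ) (f : ℝ → ℝ) : Prop :=
  ∃ n : ℕ, ∃ c r : Fin n → ℝ, ∀ t, f t = ∑ j : Fin n, FlatTerm β (c j) (r j) t

lemma flat_tendsto (β : ℝ) (hβ : 0 < β) (r : ℝ) :
    Tendsto (fun t : ℝ => t ^ r * Real.exp (-(t ^ (-β)))) (𝓝[>] (0:ℝ)) (𝓝 0) := by
  have h1 : Tendsto (fun t : ℝ => t ^ (-β)) (𝓝[>] (0:ℝ)) atTop := by
    have h := (tendsto_rpow_atTop hβ).comp tendsto_inv_nhdsGT_zero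
    refine h.congr' ?_
    filter_upwards [self_mem_nhdsWithin] with t ht
    rw [Set.mem_Ioi] at ht
    rw [Function.comp_apply, ← Real.rpow_neg_one t, ← Real.rpow_mul ht.le]
    norm_num
  have h2 : Tendsto (fun u : ℝ => u ^ (-(r/β)) * Real.exp (-u)) atTop (𝓝 0) := by
    have := tendsto_rpow_mul_exp_neg_mul_atTop_nhds_zero (-(r/β)) 1 one_pos
    simpa using this
  refine (h2.comp h1).congr' ?_
  filter_upwards [self_mem_nhdsWithin] with t ht
  rw [Set.mem_Ioi] at ht
  rw [Function.comp_apply, ← Real.rpow_mul ht.le]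
  congr 2
  field_simp

lemma flatTerm_hasDerivAt (β : ℝ) (hβ : 0 < β) (c r t : ℝ) :
    HasDerivAt (FlatTerm β c r)
      (FlatTerm β (c * r) (r - 1) t + FlatTerm β (c * β) (r - β - 1) t) t := by
  rcases lt_trichotomy t 0 with ht | rfl | ht
  · have hzero : FlatTerm β c r =ᶠ[nhds t] fun _ => (0:ℝ) := by
      filter_upwards [Iio_mem_nhds ht] with s hs
      rw [Set.mem_Iio] at hs
      simp [FlatTerm, not_lt.mpr hs.le]
    have h0 : HasDerivAt (fun _ : ℝ => (0:ℝ)) 0 t := hasDerivAt_const t 0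
    have h := h0.congr_of_eventuallyEq hzero
    refine h.congr_deriv ?_
    simp [FlatTerm, not_lt.mpr ht.le]
  · -- t = 0
    have hval : FlatTerm β (c * r) (r - 1) 0 + FlatTerm β (c * β) (r - β - 1) 0 = 0 := by
      simp [FlatTerm]
    rw [hval, hasDerivAt_iff_tendsto_slope]
    rw [← nhdsLT_sup_nhdsGT, tendsto_sup]
    constructor
    · refine Tendsto.congr' ?_ tendsto_const_nhds
      filter_upwards [self_mem_nhdsWithin] with s hs
      rw [Set.mem_Iio] at hs
      simp [slope, FlatTerm, not_lt.mpr hs.le]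
    · have key := (flat_tendsto β hβ (r - 1)).const_mul c
      rw [mul_zero] at key
      refine key.congr' ?_
      filter_upwards [self_mem_nhdsWithin] with s hs
      rw [Set.mem_Ioi] at hs
      rw [slope_def_field]
      simp only [FlatTerm, if_pos hs, if_neg (lt_irrefl (0:ℝ))]
      rw [sub_zero, sub_zero]
      rw [show r = (r - 1) + 1 by ring, Real.rpow_add hs, Real.rpow_one]
      field_simp
      ring
  · -- t > 0
    have hr : HasDerivAt (fun s : ℝ => s ^ r) (r * t ^ (r - 1)) t :=
      Real.hasDerivAt_rpow_const (Or.inl ht.ne')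
    have hp : HasDerivAt (fun s : ℝ => s ^ (-β)) (-β * t ^ (-β - 1)) t :=
      Real.hasDerivAt_rpow_const (Or.inl ht.ne')
    have he : HasDerivAt (fun s : ℝ => Real.exp (-(s ^ (-β))))
        (Real.exp (-(t ^ (-β))) * -(-β * t ^ (-β - 1))) t := hp.neg.exp
    have hF : HasDerivAt (fun s : ℝ => c * s ^ r * Real.exp (-(s ^ (-β))))
        (c * (r * t ^ (r - 1)) * Real.exp (-(t ^ (-β))) +
          c * t ^ r * (Real.exp (-(t ^ (-β))) * -(-β * t ^ (-β - 1)))) t :=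
      (hr.const_mul c).mul he
    have heq : FlatTerm β c r =ᶠ[nhds t]
        fun s => c * s ^ r * Real.exp (-(s ^ (-β))) := by
      filter_upwards [Ioi_mem_nhds ht] with s hs
      rw [Set.mem_Ioi] at hs
      simp [FlatTerm, hs]
    have h := hF.congr_of_eventuallyEq heq
    refine h.congr_deriv ?_
    simp only [FlatTerm, if_pos ht]
    rw [show r - β - 1 = r + (-β - 1) by ring, Real.rpow_add ht]
    ring

lemma goodFlat_hasDerivAt (β : ℝ) (hβ : 0 < β) {f : ℝ → ℝ} (hf : GoodFlat β f) :
    ∃ f', GoodFlat β f' ∧ ∀ t, HasDerivAt f (f' t) t := by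
  obtain ⟨n, c, r, hfe⟩ := hf
  refine ⟨fun t => ∑ j : Fin n,
      (FlatTerm β (c j * r j) (r j - 1) t + FlatTerm β (c j * β) (r j - β - 1) t), ?_, ?_⟩
  · refine ⟨n + n, Fin.append (fun j => c j * r j) (fun j => c j * β),
      Fin.append (fun j => r j - 1) (fun j => r j - β - 1), fun t => ?_⟩
    simp only [Fin.sum_univ_add, Fin.append_left, Fin.append_right]
    rw [Finset.sum_add_distrib]
  · intro t
    have hfun : f = fun t => ∑ j : Fin n, FlatTerm β (c j) (r j) t := funext hfe
    rw [hfun]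
    exact HasDerivAt.fun_sum fun j _ => flatTerm_hasDerivAt β hβ (c j) (r j) t

lemma goodFlat_flatFn (β : ℝ) : GoodFlat β (flatFn β) := by
  refine ⟨1, fun _ => 1, fun _ => 0, fun t => ?_⟩
  simp [flatFn, FlatTerm]

lemma goodFlat_iteratedDeriv (β : ℝ) (hβ : 0 < β) (k : ℕ) :
    GoodFlat β (iteratedDeriv k (flatFn β)) := by
  induction k with
  | zero => simpa [iteratedDeriv_zero] using goodFlat_flatFn β
  | succ k ih =>
    obtain ⟨f', hg, hd⟩ := goodFlat_hasDerivAt β hβ ih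
    have h : iteratedDeriv (k + 1) (flatFn β) = f' := by
      rw [iteratedDeriv_succ]
      funext s
      exact (hd s).deriv
    rw [h]; exact hg

lemma flatFn_iter_hasDerivAt (β : ℝ) (hβ : 0 < β) (k : ℕ) (t : ℝ) :
    HasDerivAt (iteratedDeriv k (flatFn β)) (iteratedDeriv (k + 1) (flatFn β) t) t := by
  obtain ⟨f', hg, hd⟩ := goodFlat_hasDerivAt β hβ (goodFlat_iteratedDeriv β hβ k)
  have h : iteratedDeriv (k + 1) (flatFn β) = f' := by
    rw [iteratedDeriv_succ]; funext s; exact (hd s).deriv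
  rw [h]; exact hd t

/-! ### The falling-factorial polynomials and their discrete Laplacian -/

/-- `Pr X k = (X+k)(X+k-1)⋯(X-k+1)`. -/
noncomputable def Pr (X : ℝ) (k : ℕ) : ℝ :=
  ∏ i ∈ Finset.range (2 * k), (X + (k : ℝ) - (i : ℝ))

/-- `Gf n a = a(a-1)⋯(a-n+1)`. -/
noncomputable def Gf (n : ℕ) (a : ℝ) : ℝ := ∏ i ∈ Finset.range n, (a - (i : ℝ))

lemma Gf_step (n : ℕ) (a : ℝ) :
    Gf (n + 1) (a + 1) - Gf (n + 1) a = ((n : ℝ) + 1) * Gf n a := by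
  have h1 : Gf (n + 1) (a + 1) = Gf n a * (a + 1) := by
    rw [Gf, Finset.prod_range_succ']
    congr 1
    · apply Finset.prod_congr rfl; intro i _; push_cast; ring
    · norm_num
  have h2 : Gf (n + 1) a = Gf n a * (a - n) := Finset.prod_range_succ _ n
  rw [h1, h2]; ring

lemma Pr_eq_Gf (X : ℝ) (k : ℕ) : Pr X k = Gf (2 * k) (X + k) := by
  unfold Pr Gf
  apply Finset.prod_congr rfl; intro i _; ring

lemma Pr_second_diff (k : ℕ) (X : ℝ) :
    Pr (X + 1) (k + 1) + Pr (X - 1) (k + 1) - 2 * Pr X (k + 1) =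
      (2 * (k : ℝ) + 2) * (2 * (k : ℝ) + 1) * Pr X k := by
  have e1 : Pr (X + 1) (k + 1) = Gf (2 * k + 1 + 1) (X + (k : ℝ) + 1 + 1) := by
    rw [Pr_eq_Gf, show 2 * (k + 1) = 2 * k + 1 + 1 by ring]
    congr 1; push_cast; ring
  have e2 : Pr X (k + 1) = Gf (2 * k + 1 + 1) (X + (k : ℝ) + 1) := by
    rw [Pr_eq_Gf, show 2 * (k + 1) = 2 * k + 1 + 1 by ring]
    congr 1; push_cast; ring
  have e3 : Pr (X - 1) (k + 1) = Gf (2 * k + 1 + 1) (X + (k : ℝ)) := by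
    rw [Pr_eq_Gf, show 2 * (k + 1) = 2 * k + 1 + 1 by ring]
    congr 1; push_cast; ring
  have s1 := Gf_step (2 * k + 1) (X + (k : ℝ) + 1)
  have s2 := Gf_step (2 * k + 1) (X + (k : ℝ))
  have s3 := Gf_step (2 * k) (X + (k : ℝ))
  rw [e1, e2, e3, Pr_eq_Gf]
  push_cast at s1 s2 s3
  have hGf : Gf (2 * k + 1) (X + (k : ℝ) + 1) - Gf (2 * k + 1) (X + (k : ℝ)) =
      (2 * (k : ℝ) + 1) * Gf (2 * k) (X + (k : ℝ)) := by
    linear_combination s3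
  linear_combination s1 - s2 + (2 * (k : ℝ) + 2) * hGf

/-! ### The solution as finite sums -/

noncomputable def Wsol (β : ℝ) (m : ℕ) (t : ℝ) : ℝ :=
  ∑ k ∈ Finset.range (m + 1),
    iteratedDeriv k (flatFn β) t / (Nat.factorial (2 * k) : ℝ) * Pr (m : ℝ) k

lemma Pr_vanish (m k : ℕ) (h : m < k) : Pr (m : ℝ) k = 0 := by
  apply Finset.prod_eq_zero (i := m + k)
  · rw [Finset.mem_range]; omega
  · push_cast; ring

lemma Wsol_extend (β : ℝ) (m M : ℕ) (t : ℝ) (h : m ≤ M) :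
    Wsol β m t = ∑ k ∈ Finset.range (M + 1),
      iteratedDeriv k (flatFn β) t / (Nat.factorial (2 * k) : ℝ) * Pr (m : ℝ) k := by
  apply Finset.sum_subset
  · exact Finset.range_subset_range.mpr (by omega)
  · intro k hk hk2
    rw [Finset.mem_range] at hk hk2
    rw [Pr_vanish m k (by omega), mul_zero]

lemma tsum_eq_Wsol (β : ℝ) (m : ℕ) (t : ℝ) :
    (∑' k : ℕ, iteratedDeriv k (flatFn β) t / (Nat.factorial (2 * k) : ℝ) *
      ∏ i ∈ Finset.range (2 * k), ((m : ℝ) + (k : ℝ) - (i : ℝ))) = Wsol β m t := by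
  rw [Wsol]
  have h := tsum_eq_sum (L := SummationFilter.unconditional ℕ) (s := Finset.range (m + 1))
    (f := fun k : ℕ => iteratedDeriv k (flatFn β) t / (Nat.factorial (2 * k) : ℝ) *
      ∏ i ∈ Finset.range (2 * k), ((m : ℝ) + (k : ℝ) - (i : ℝ))) ?_
  · rw [h]; unfold Pr; rfl
  · intro k hk
    rw [Finset.mem_range, not_lt] at hk
    have hp := Pr_vanish m k (by omega)
    rw [Pr] at hp
    simp only [hp, mul_zero]

lemma latticeSol_eq_Wsol (β : ℝ) {x : ℤ} (hx : 0 ≤ x) :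
    latticeSol β x = Wsol β x.toNat := by
  funext t
  have hc : (x : ℝ) = ((x.toNat : ℕ) : ℝ) := by
    exact_mod_cast (congrArg (fun y : ℤ => (y : ℝ)) (Int.toNat_of_nonneg hx)).symm
  rw [latticeSol, if_pos hx]
  simp_rw [hc]
  exact tsum_eq_Wsol β x.toNat t

lemma latticeSol_eq_Wsol_neg (β : ℝ) {x : ℤ} (hx : x < 0) :
    latticeSol β x = Wsol β (-x - 1).toNat := by
  funext t
  have hc : ((-x - 1 : ℤ) : ℝ) = (((-x - 1).toNat : ℕ) : ℝ) := by
    exact_mod_cast (congrArg (fun y : ℤ => (y : ℝ))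
      (Int.toNat_of_nonneg (by omega : (0:ℤ) ≤ -x - 1))).symm
  rw [latticeSol, if_neg (by omega)]
  simp_rw [hc]
  exact tsum_eq_Wsol β (-x - 1).toNat t

lemma Wsol_hasDerivAt (β : ℝ) (hβ : 0 < β) (m : ℕ) (t : ℝ) :
    HasDerivAt (fun s => Wsol β m s)
      (Wsol β (m + 1) t + Wsol β (m - 1) t - 2 * Wsol β m t) t := by
  have hD : HasDerivAt (fun s => Wsol β m s)
      (∑ k ∈ Finset.range (m + 1),
        iteratedDeriv (k + 1) (flatFn β) t / (Nat.factorial (2 * k) : ℝ) * Pr (m : ℝ) k) t := by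
    unfold Wsol
    apply HasDerivAt.fun_sum
    intro k _
    exact ((flatFn_iter_hasDerivAt β hβ k t).div_const _).mul_const _
  convert hD using 1
  rcases m with _ | j
  · norm_num [Wsol, Pr, Finset.sum_range_succ, Finset.prod_range_succ, Nat.factorial]
    ring
  · -- m = j + 1
    rw [show j + 1 - 1 = j from rfl]
    rw [Wsol_extend β j (j + 1 + 1) t (by omega), Wsol_extend β (j + 1) (j + 1 + 1) t (by omega),
      Wsol_extend β (j + 1 + 1) (j + 1 + 1) t le_rfl]
    rw [Finset.mul_sum, ← Finset.sum_add_distrib, ← Finset.sum_sub_distrib]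
    rw [Finset.sum_range_succ']
    have hzero : iteratedDeriv 0 (flatFn β) t / (Nat.factorial (2 * 0) : ℝ) * Pr ((j+1+1:ℕ):ℝ) 0 +
        iteratedDeriv 0 (flatFn β) t / (Nat.factorial (2 * 0) : ℝ) * Pr ((j:ℕ):ℝ) 0 -
        2 * (iteratedDeriv 0 (flatFn β) t / (Nat.factorial (2 * 0) : ℝ) * Pr ((j+1:ℕ):ℝ) 0) = 0 := by
      unfold Pr
      norm_num
      ring
    rw [hzero, add_zero]
    apply Finset.sum_congr rfl
    intro k _
    have h2 : Pr ((j : ℝ) + 1 + 1) (k + 1) + Pr (j : ℝ) (k + 1) - 2 * Pr ((j : ℝ) + 1) (k + 1) =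
        (2 * (k : ℝ) + 2) * (2 * (k : ℝ) + 1) * Pr ((j : ℝ) + 1) k := by
      have h := Pr_second_diff k ((j : ℝ) + 1)
      rw [show (j : ℝ) + 1 - 1 = (j : ℝ) by ring] at h
      exact h
    have hfac : (Nat.factorial (2 * (k + 1)) : ℝ) =
        (2 * (k : ℝ) + 2) * ((2 * (k : ℝ) + 1) * (Nat.factorial (2 * k) : ℝ)) := by
      rw [show 2 * (k + 1) = (2 * k + 1) + 1 by ring, Nat.factorial_succ,
        show 2 * k + 1 = (2 * k) + 1 from rfl, Nat.factorial_succ]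
      push_cast; ring
    have hne : (Nat.factorial (2 * k) : ℝ) ≠ 0 := by
      exact_mod_cast (Nat.factorial_ne_zero (2 * k))
    have hne1 : (2 * (k : ℝ) + 2) ≠ 0 := by positivity
    have hne2 : (2 * (k : ℝ) + 1) ≠ 0 := by positivity
    push_cast
    rw [hfac]
    linear_combination (norm := skip) (iteratedDeriv (k + 1) (flatFn β) t / ((2 * (k : ℝ) + 2) * ((2 * (k : ℝ) + 1) * (Nat.factorial (2 * k) : ℝ)))) * h2
    field_simp
    ring

theorem latticeSol_solves_heat (β : ℝ) (hβ : 1 < β) :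
    ∀ (x : ℤ) (t : ℝ),
      HasDerivAt (fun s => latticeSol β x s)
        (latticeSol β (x + 1) t + latticeSol β (x - 1) t - 2 * latticeSol β x t) t := by
  intro x t
  have h0 : (0:ℝ) < β := zero_lt_one.trans hβ
  rcases lt_trichotomy x 0 with hx | rfl | hx
  · -- x < 0
    have m := (-x - 1).toNat
    rw [latticeSol_eq_Wsol_neg β hx]
    have hx1 : latticeSol β (x + 1) = Wsol β ((-x - 1).toNat - 1) := by
      rcases eq_or_lt_of_le (by omega : x ≤ -1) with h | h
      · rw [show x + 1 = 0 by omega, latticeSol_eq_Wsol β le_rfl,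
          show (-x - 1).toNat - 1 = (0 : ℤ).toNat by omega]
      · rw [latticeSol_eq_Wsol_neg β (by omega : x + 1 < 0),
          show (-x - 1).toNat - 1 = (-(x + 1) - 1).toNat by omega]
    have hx2 : latticeSol β (x - 1) = Wsol β ((-x - 1).toNat + 1) := by
      rw [latticeSol_eq_Wsol_neg β (by omega : x - 1 < 0),
        show (-x - 1).toNat + 1 = (-(x - 1) - 1).toNat by omega]
    rw [hx1, hx2]
    have H := Wsol_hasDerivAt β h0 ((-x - 1).toNat) t
    have : Wsol β ((-x - 1).toNat + 1) t + Wsol β ((-x - 1).toNat - 1) t -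
        2 * Wsol β ((-x - 1).toNat) t =
      Wsol β ((-x - 1).toNat - 1) t + Wsol β ((-x - 1).toNat + 1) t -
        2 * Wsol β ((-x - 1).toNat) t := by ring
    rw [this] at H
    exact H
  · -- x = 0
    rw [latticeSol_eq_Wsol β le_rfl]
    rw [show (0 : ℤ) + 1 = 1 from rfl, latticeSol_eq_Wsol β (by omega : (0:ℤ) ≤ 1)]
    rw [show (0 : ℤ) - 1 = -1 from rfl, latticeSol_eq_Wsol_neg β (by omega : (-1:ℤ) < 0)]
    have H := Wsol_hasDerivAt β h0 0 t
    have e1 : ((0:ℤ)).toNat = 0 := rfl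
    have e2 : ((1:ℤ)).toNat = 1 := rfl
    have e3 : ((-(-1:ℤ) - 1)).toNat = 0 := rfl
    rw [e1, e2, e3]
    simpa using H
  · -- 0 < x
    rw [latticeSol_eq_Wsol β hx.le, latticeSol_eq_Wsol β (by omega : (0:ℤ) ≤ x + 1),
      latticeSol_eq_Wsol β (by omega : (0:ℤ) ≤ x - 1)]
    rw [show (x + 1).toNat = x.toNat + 1 by omega, show (x - 1).toNat = x.toNat - 1 by omega]
    exact Wsol_hasDerivAt β h0 x.toNat t
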